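/- Let G be a topologically finitely generated pro-p group. Then every subgroup of finite index (as an abstract subgroup) is open in G. -/

import Mathlib

namespace SerrePf

open scoped commutatorElement

universe u

/-! ### Commutator identities with central values -/

lemma comm_mul_second {Q : Type*} [Group Q] (t v w : Q)
    (h : ∀ x : Q, Commute x ⁅t, w⁆) : ⁅t, v * w⁆ = ⁅t, v⁆ * ⁅t, w⁆ := by
  have key : w * t⁻¹ * w⁻¹ = t⁻¹ * ⁅t, w⁆ := by
    rw [commutatorElement_def]; group
  calc ⁅t, v * w⁆ = t * v * (w * t⁻¹ * w⁻¹) * v⁻¹ := by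
        rw [commutatorElement_def]; group
    _ = t * v * (t⁻¹ * ⁅t, w⁆) * v⁻¹ := by rw [key]
    _ = (t * v * t⁻¹ * v⁻¹) * (v * ⁅t, w⁆ * v⁻¹) := by group
    _ = (t * v * t⁻¹ * v⁻¹) * (⁅t, w⁆ * v * v⁻¹) := by rw [(h v).eq]
    _ = ⁅t, v⁆ * ⁅t, w⁆ := by rw [commutatorElement_def t v]; group

lemma comm_mul_first {Q : Type*} [Group Q] (u v w : Q)
    (h : ∀ x : Q, Commute x ⁅w, u⁆) : ⁅v * w, u⁆ = ⁅v, u⁆ * ⁅w, u⁆ := by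
  have key : w * u * w⁻¹ * u⁻¹ = ⁅w, u⁆ := (commutatorElement_def w u).symm
  calc ⁅v * w, u⁆ = v * (w * u * w⁻¹ * u⁻¹) * (u * v⁻¹ * u⁻¹) := by
        rw [commutatorElement_def]; group
    _ = v * ⁅w, u⁆ * (u * v⁻¹ * u⁻¹) := by rw [key]
    _ = ⁅w, u⁆ * v * (u * v⁻¹ * u⁻¹) := by rw [← (h v).eq]
    _ = ⁅w, u⁆ * ⁅v, u⁆ := by rw [commutatorElement_def v u]; group
    _ = ⁅v, u⁆ * ⁅w, u⁆ := by rw [← (h ⁅v, u⁆).eq]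

/-! ### Pinned products of commutators -/

/-- `pinProd a g = ⁅a 0, g 0⁆ * ⁅a 1, g 1⁆ * ⋯` -/
def pinProd {Q : Type u} [Group Q] : ∀ {d : ℕ}, (Fin d → Q) → (Fin d → Q) → Q
  | 0, _, _ => 1
  | _ + 1, a, g => ⁅a 0, g 0⁆ * pinProd (Fin.tail a) (Fin.tail g)

lemma pinProd_mem {Q : Type u} [Group Q] {H : Subgroup Q} :
    ∀ {d : ℕ} (a g : Fin d → Q), (∀ i, ⁅a i, g i⁆ ∈ H) → pinProd a g ∈ H
  | 0, _, _, _ => H.one_mem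
  | d + 1, a, g, h =>
    H.mul_mem (h 0) (pinProd_mem (Fin.tail a) (Fin.tail g) (fun i => h i.succ))

lemma pinProd_mem_commutator {Q : Type u} [Group Q] {d : ℕ} (a g : Fin d → Q) :
    pinProd a g ∈ commutator Q := by
  refine pinProd_mem a g (fun i => ?_)
  rw [commutator_def]
  exact Subgroup.commutator_mem_commutator (Subgroup.mem_top _) (Subgroup.mem_top _)

lemma pinProd_central {Q : Type u} [Group Q] :
    ∀ {d : ℕ} (a g : Fin d → Q), (∀ i (x : Q), Commute x ⁅a i, g i⁆) →
      ∀ x : Q, Commute x (pinProd a g)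
  | 0, _, _, _, x => Commute.one_right x
  | d + 1, a, g, h, x =>
    Commute.mul_right (h 0 x)
      (pinProd_central (Fin.tail a) (Fin.tail g) (fun i => h i.succ) x)

lemma pinProd_split {Q : Type u} [Group Q] :
    ∀ {d : ℕ} (a v g w : Fin d → Q), (∀ i (x : Q), Commute x ⁅a i, v i⁆) →
      (∀ i, ⁅a i, w i⁆ = ⁅a i, v i⁆ * ⁅a i, g i⁆) →
      pinProd a w = pinProd a v * pinProd a g
  | 0, _, _, _, _, _, _ => (one_mul 1).symm
  | d + 1, a, v, g, w, hc, hw => by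
    have ih := pinProd_split (Fin.tail a) (Fin.tail v) (Fin.tail g) (Fin.tail w)
      (fun i => hc i.succ) (fun i => hw i.succ)
    show ⁅a 0, w 0⁆ * pinProd (Fin.tail a) (Fin.tail w) = _
    rw [ih, hw 0]
    have h1 : Commute ⁅a 0, g 0⁆ (pinProd (Fin.tail a) (Fin.tail v)) :=
      pinProd_central (Fin.tail a) (Fin.tail v) (fun i => hc i.succ) _
    show ⁅a 0, v 0⁆ * ⁅a 0, g 0⁆ *
        (pinProd (Fin.tail a) (Fin.tail v) * pinProd (Fin.tail a) (Fin.tail g)) =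
      ⁅a 0, v 0⁆ * pinProd (Fin.tail a) (Fin.tail v) *
        (⁅a 0, g 0⁆ * pinProd (Fin.tail a) (Fin.tail g))
    calc ⁅a 0, v 0⁆ * ⁅a 0, g 0⁆ *
        (pinProd (Fin.tail a) (Fin.tail v) * pinProd (Fin.tail a) (Fin.tail g))
        = ⁅a 0, v 0⁆ * ((⁅a 0, g 0⁆ * pinProd (Fin.tail a) (Fin.tail v)) *
            pinProd (Fin.tail a) (Fin.tail g)) := by simp only [mul_assoc]
      _ = ⁅a 0, v 0⁆ * ((pinProd (Fin.tail a) (Fin.tail v) * ⁅a 0, g 0⁆) *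
            pinProd (Fin.tail a) (Fin.tail g)) := by rw [h1.eq]
      _ = _ := by simp only [mul_assoc]

lemma pinProd_one {Q : Type u} [Group Q] :
    ∀ {d : ℕ} (a g : Fin d → Q), (∀ i, g i = 1) → pinProd a g = 1
  | 0, _, _, _ => rfl
  | d + 1, a, g, hg => by
    show ⁅a 0, g 0⁆ * pinProd (Fin.tail a) (Fin.tail g) = 1
    rw [hg 0, pinProd_one (Fin.tail a) (Fin.tail g) (fun i => hg i.succ),
      commutatorElement_one_right, one_mul]

lemma pinProd_single {Q : Type u} [Group Q] :
    ∀ {d : ℕ} (a : Fin d → Q) (i : Fin d) (v : Q),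
      pinProd a (Function.update (fun _ => (1 : Q)) i v) = ⁅a i, v⁆ := by
  intro d
  induction d with
  | zero => exact fun a i v => absurd i.2 (by simp)
  | succ d ih =>
    intro a i v
    refine Fin.cases ?_ ?_ i
    · show ⁅a 0, Function.update (fun _ => (1 : Q)) 0 v 0⁆ * pinProd _ _ = _
      rw [Function.update_self, Fin.tail_update_zero]
      have h0 : pinProd (Fin.tail a) (Fin.tail (fun _ : Fin (d + 1) => (1 : Q))) = 1 :=
        pinProd_one _ _ (fun i => rfl)
      rw [h0, mul_one]
    · intro j
      show ⁅a 0, Function.update (fun _ => (1 : Q)) j.succ v 0⁆ * pinProd _ _ = _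
      rw [Function.update_of_ne (Fin.succ_ne_zero j).symm, Fin.tail_update_succ,
        commutatorElement_one_right, one_mul]
      exact ih (Fin.tail a) j v

lemma pinProd_map {Q : Type u} {R : Type u} [Group Q] [Group R] (f : Q →* R) :
    ∀ {d : ℕ} (a g : Fin d → Q), f (pinProd a g) = pinProd (f ∘ a) (f ∘ g)
  | 0, _, _ => f.map_one
  | d + 1, a, g => by
    show f (⁅a 0, g 0⁆ * pinProd (Fin.tail a) (Fin.tail g)) = _
    rw [f.map_mul, map_commutatorElement, pinProd_map f (Fin.tail a) (Fin.tail g)]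
    rfl


/-! ### Lower central series helpers -/

lemma lcs_central {Q : Type u} [Group Q] {k : ℕ}
    (hbot : (⊤ : Subgroup Q).lowerCentralSeries (k + 1) = ⊥) :
    ∀ z ∈ (⊤ : Subgroup Q).lowerCentralSeries k, ∀ x : Q, Commute x z := by
  intro z hz x
  have h1 : ⁅z, x⁆ ∈ (⊤ : Subgroup Q).lowerCentralSeries (k + 1) :=
    Subgroup.commutator_mem_commutator hz (Subgroup.mem_top x)
  rw [hbot, Subgroup.mem_bot] at h1
  exact (commutatorElement_eq_one_iff_commute.mp h1).symm

lemma lcs_comm_mem {Q : Type u} [Group Q] {m : ℕ} {u : Q}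
    (hu : u ∈ (⊤ : Subgroup Q).lowerCentralSeries m) (t : Q) :
    ⁅u, t⁆ ∈ (⊤ : Subgroup Q).lowerCentralSeries (m + 1) :=
  Subgroup.commutator_mem_commutator hu (Subgroup.mem_top t)

lemma lcs_comm_mem' {Q : Type u} [Group Q] {m : ℕ} {u : Q}
    (hu : u ∈ (⊤ : Subgroup Q).lowerCentralSeries m) (t : Q) :
    ⁅t, u⁆ ∈ (⊤ : Subgroup Q).lowerCentralSeries (m + 1) := by
  rw [← commutatorElement_inv]
  exact Subgroup.inv_mem _ (lcs_comm_mem hu t)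

lemma lcs_map_surjective {Q : Type u} {R : Type u} [Group Q] [Group R] (f : Q →* R)
    (hf : Function.Surjective f) (k : ℕ) :
    Subgroup.map f ((⊤ : Subgroup Q).lowerCentralSeries k) = (⊤ : Subgroup R).lowerCentralSeries k := by
  induction k with
  | zero =>
    rw [Subgroup.lowerCentralSeries_zero, Subgroup.lowerCentralSeries_zero]
    exact Subgroup.map_top_of_surjective f hf
  | succ k ih =>
    show Subgroup.map f ⁅(⊤ : Subgroup Q).lowerCentralSeries k, ⊤⁆ = ⁅(⊤ : Subgroup R).lowerCentralSeries k, ⊤⁆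
    rw [Subgroup.map_commutator, ih, Subgroup.map_top_of_surjective f hf]

/-! ### Representation of central commutator elements -/

lemma central_rep {Q : Type u} [Group Q] (m : ℕ)
    (hbot : (⊤ : Subgroup Q).lowerCentralSeries (m + 2) = ⊥)
    {d : ℕ} (a : Fin d → Q) (ha : Subgroup.closure (Set.range a) = ⊤) :
    ∀ z ∈ (⊤ : Subgroup Q).lowerCentralSeries (m + 1), ∃ v : Fin d → Q,
      (∀ i, v i ∈ (⊤ : Subgroup Q).lowerCentralSeries m) ∧ z = pinProd a v := by
  have hcen : ∀ z ∈ (⊤ : Subgroup Q).lowerCentralSeries (m + 1), ∀ x : Q, Commute x z :=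
    lcs_central hbot
  have hom2 : ∀ (t v w : Q), w ∈ (⊤ : Subgroup Q).lowerCentralSeries m →
      ⁅t, v * w⁆ = ⁅t, v⁆ * ⁅t, w⁆ :=
    fun t v w hw => comm_mul_second t v w (fun x => hcen _ (lcs_comm_mem' hw t) x)
  have hom1 : ∀ (u v w : Q), u ∈ (⊤ : Subgroup Q).lowerCentralSeries m →
      ⁅v * w, u⁆ = ⁅v, u⁆ * ⁅w, u⁆ :=
    fun u v w hu => comm_mul_first u v w (fun x => hcen _ (lcs_comm_mem' hu w) x)
  let R : Fin d → Subgroup Q := fun i =>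
    { carrier := {z | ∃ v ∈ (⊤ : Subgroup Q).lowerCentralSeries m, z = ⁅a i, v⁆}
      one_mem' := ⟨1, Subgroup.one_mem _, (commutatorElement_one_right _).symm⟩
      mul_mem' := by
        rintro x y ⟨v, hv, rfl⟩ ⟨w, hw, rfl⟩
        exact ⟨v * w, Subgroup.mul_mem _ hv hw, (hom2 _ v w hw).symm⟩
      inv_mem' := by
        rintro x ⟨v, hv, rfl⟩
        refine ⟨v⁻¹, Subgroup.inv_mem _ hv, ?_⟩
        have h1 := hom2 (a i) v v⁻¹ (Subgroup.inv_mem _ hv)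
        rw [mul_inv_cancel, commutatorElement_one_right] at h1
        exact inv_eq_of_mul_eq_one_right h1.symm }
  have hsup : (⊤ : Subgroup Q).lowerCentralSeries (m + 1) ≤ ⨆ i, R i := by
    show (⁅(⊤ : Subgroup Q).lowerCentralSeries m, (⊤ : Subgroup Q)⁆ : Subgroup Q) ≤ _
    refine Subgroup.commutator_le.mpr ?_
    intro u hu t _
    let φ : Q →* Q :=
      { toFun := fun t => ⁅t, u⁆
        map_one' := commutatorElement_one_left u
        map_mul' := fun v w => hom1 u v w hu }
    have hφ : ∀ t ∈ Subgroup.closure (Set.range a), ⁅t, u⁆ ∈ ⨆ i, R i := by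
      intro t ht
      have hle : Subgroup.closure (Set.range a) ≤ (⨆ i, R i).comap φ := by
        refine (Subgroup.closure_le _).mpr ?_
        rintro _ ⟨i, rfl⟩
        exact Subgroup.mem_comap.mpr (Subgroup.mem_iSup_of_mem i ⟨u, hu, rfl⟩)
      exact Subgroup.mem_comap.mp (hle ht)
    rw [show ⁅u, t⁆ = ⁅t, u⁆⁻¹ from (commutatorElement_inv t u).symm]
    exact Subgroup.inv_mem _ (hφ t (by rw [ha]; exact Subgroup.mem_top t))
  intro z hz
  refine Subgroup.iSup_induction' (C := fun x _ => ∃ v : Fin d → Q,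
      (∀ i, v i ∈ (⊤ : Subgroup Q).lowerCentralSeries m) ∧ x = pinProd a v) R ?_ ?_ ?_ (hsup hz)
  · rintro i x ⟨v, hv, rfl⟩
    refine ⟨Function.update (fun _ => 1) i v, ?_, (pinProd_single a i v).symm⟩
    intro j; by_cases hj : j = i
    · subst hj; rw [Function.update_self]; exact hv
    · rw [Function.update_of_ne hj]; exact Subgroup.one_mem _
  · exact ⟨fun _ => 1, fun i => Subgroup.one_mem _, (pinProd_one a _ fun _ => rfl).symm⟩
  · rintro x y hx hy ⟨v, hv, rfl⟩ ⟨w, hw, rfl⟩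
    refine ⟨fun i => v i * w i, fun i => Subgroup.mul_mem _ (hv i) (hw i), ?_⟩
    exact (pinProd_split a v w _ (fun i x => hcen _ (lcs_comm_mem' (hv i) (a i)) x)
      (fun i => hom2 (a i) (v i) (w i) (hw i))).symm

/-! ### Main nilpotent representation lemma -/

theorem nilpotent_rep (n : ℕ) :
    ∀ (Q : Type u) [Group Q], (⊤ : Subgroup Q).lowerCentralSeries (n + 1) = ⊥ →
    ∀ {d : ℕ} (a : Fin d → Q), Subgroup.closure (Set.range a) = ⊤ →
    ∀ x ∈ commutator Q, ∃ g : Fin d → Q, x = pinProd a g := by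
  induction n with
  | zero =>
    intro Q _ hbot d a ha x hx
    have h1 : x ∈ (⊤ : Subgroup Q).lowerCentralSeries 1 := by
      rw [Subgroup.top_lowerCentralSeries_one]; exact hx
    rw [hbot, Subgroup.mem_bot] at h1
    exact ⟨fun _ => 1, by rw [h1, pinProd_one a _ fun _ => rfl]⟩
  | succ n ih =>
    intro Q _ hbot d a ha x hx
    set L := (⊤ : Subgroup Q).lowerCentralSeries (n + 1) with hLdef
    let π := QuotientGroup.mk' L
    have hπ : Function.Surjective π := QuotientGroup.mk'_surjective L
    have hQbot : (⊤ : Subgroup (Q ⧸ L)).lowerCentralSeries (n + 1) = ⊥ := by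
      rw [← lcs_map_surjective π hπ (n + 1)]
      refine (Subgroup.map_eq_bot_iff _).mpr ?_
      rw [QuotientGroup.ker_mk']
    have hgen : Subgroup.closure (Set.range (π ∘ a)) = ⊤ := by
      rw [Set.range_comp, ← MonoidHom.map_closure, ha, Subgroup.map_top_of_surjective _ hπ]
    have hxQ : π x ∈ commutator (Q ⧸ L) := by
      have h1 : π x ∈ Subgroup.map π (commutator Q) := Subgroup.mem_map_of_mem π hx
      rwa [commutator_def, Subgroup.map_commutator,
        Subgroup.map_top_of_surjective _ hπ, ← commutator_def] at h1
    obtain ⟨gq, hgq⟩ := ih (Q ⧸ L) hQbot (π ∘ a) hgen (π x) hxQ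
    choose gl hgl using fun i => hπ (gq i)
    have hz : x * (pinProd a gl)⁻¹ ∈ L := by
      have h2 : π (x * (pinProd a gl)⁻¹) = 1 := by
        rw [map_mul, map_inv, pinProd_map π a gl, show π ∘ gl = gq from funext hgl,
          ← hgq, mul_inv_cancel]
      rwa [← QuotientGroup.ker_mk' L, MonoidHom.mem_ker]
    obtain ⟨v, hv, hrep⟩ := central_rep n hbot a ha _ hz
    refine ⟨fun i => gl i * v i, ?_⟩
    have hcen : ∀ z ∈ (⊤ : Subgroup Q).lowerCentralSeries (n + 1), ∀ x : Q, Commute x z :=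
      lcs_central hbot
    have hsplit : ∀ i, ⁅a i, gl i * v i⁆ = ⁅a i, v i⁆ * ⁅a i, gl i⁆ := by
      intro i
      rw [comm_mul_second (a i) (gl i) (v i)
        (fun x => hcen _ (lcs_comm_mem' (hv i) (a i)) x)]
      exact (hcen _ (lcs_comm_mem' (hv i) (a i)) ⁅a i, gl i⁆).eq
    rw [pinProd_split a v gl _
      (fun i x => hcen _ (lcs_comm_mem' (hv i) (a i)) x) hsplit, ← hrep,
      inv_mul_cancel_right]

/-! ### Topological helpers -/

section Topo

variable {G : Type u} [Group G] [TopologicalSpace G] [IsTopologicalGroup G]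
  [CompactSpace G] [T2Space G] [TotallyDisconnectedSpace G]

lemma exists_openNormal_subset {W : Set G} (hW : IsOpen W) (h1 : (1 : G) ∈ W) :
    ∃ U : Subgroup G, U.Normal ∧ IsOpen (U : Set G) ∧ (U : Set G) ⊆ W := by
  obtain ⟨V, hVclopen, h1V, hVW⟩ := compact_exists_isClopen_in_isOpen hW h1
  obtain ⟨H, hH⟩ :=
    IsTopologicalGroup.exist_openNormalSubgroup_sub_clopen_nhds_of_one hVclopen h1V
  exact ⟨H.toSubgroup, H.isNormal', H.isOpen, fun x hx => hVW (hH hx)⟩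

lemma mem_closed_of_approx {T : Set G} (hT : IsClosed T) {x : G}
    (h : ∀ U : Subgroup G, U.Normal → IsOpen (U : Set G) → ∃ t ∈ T, x⁻¹ * t ∈ U) :
    x ∈ T := by
  have hx : x ∈ closure T := by
    rw [mem_closure_iff]
    intro O hO hxO
    have hpre : IsOpen ((x * ·) ⁻¹' O) := hO.preimage (continuous_const.mul continuous_id)
    obtain ⟨U, hUn, hUo, hUW⟩ := exists_openNormal_subset hpre (by simpa using hxO)
    obtain ⟨t, htT, htU⟩ := h U hUn hUo
    exact ⟨t, by simpa using hUW htU, htT⟩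
  rwa [hT.closure_eq] at hx

variable {p : ℕ}

lemma exists_pow_eq (hp : p.Prime)
    (hpro : ∀ N : Subgroup G, N.Normal → IsOpen (N : Set G) → ∃ n : ℕ, N.index = p ^ n)
    {q : ℕ} (hq : q.Prime) (hqp : q ≠ p) (g : G) : ∃ h : G, h ^ q = g := by
  set C := (Subgroup.zpowers g).topologicalClosure with hC
  have hCc : IsCompact (C : Set G) :=
    (Subgroup.isClosed_topologicalClosure (Subgroup.zpowers g)).isCompact
  set T := (fun x : G => x ^ q) '' (C : Set G) with hT
  have hTc : IsClosed T := (hCc.image (continuous_pow q)).isClosed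
  have hgT : g ∈ T := by
    apply mem_closed_of_approx hTc
    intro U hUn hUo
    obtain ⟨nU, hU⟩ := hpro U hUn hUo
    haveI := hUn
    haveI : Finite (G ⧸ U) := Subgroup.quotient_finite_of_isOpen U hUo
    have horder : orderOf (QuotientGroup.mk g : G ⧸ U) ∣ p ^ nU := by
      rw [← hU, Subgroup.index_eq_card]
      exact orderOf_dvd_natCard _
    by_cases ht1 : orderOf (QuotientGroup.mk g : G ⧸ U) ≤ 1
    · have h1 : orderOf (QuotientGroup.mk g : G ⧸ U) = 1 :=
        le_antisymm ht1 (orderOf_pos _)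
      have hgU : g ∈ U := by
        rw [← QuotientGroup.eq_one_iff]
        exact orderOf_eq_one_iff.mp h1
      refine ⟨(1 : G) ^ q, ⟨1, Subgroup.one_mem C, rfl⟩, ?_⟩
      rw [one_pow, mul_one]
      exact U.inv_mem hgU
    · push_neg at ht1
      have hcop : Nat.Coprime q (orderOf (QuotientGroup.mk g : G ⧸ U)) := by
        refine (Nat.Prime.coprime_iff_not_dvd hq).mpr (fun hdvd => hqp ?_)
        exact (Nat.prime_dvd_prime_iff_eq hq hp).mp (hq.dvd_of_dvd_pow (hdvd.trans horder))
      obtain ⟨r, -, hr⟩ := Nat.exists_mul_mod_eq_one_of_coprime hcop ht1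
      refine ⟨(g ^ r) ^ q, ⟨g ^ r, ?_, rfl⟩, ?_⟩
      · exact Subgroup.le_topologicalClosure _
          (Subgroup.pow_mem _ (Subgroup.mem_zpowers g) r)
      · refine QuotientGroup.eq.mp ?_
        show (QuotientGroup.mk g : G ⧸ U) = QuotientGroup.mk ((g ^ r) ^ q)
        rw [QuotientGroup.mk_pow, QuotientGroup.mk_pow, ← pow_mul]
        conv_lhs => rw [show (QuotientGroup.mk g : G ⧸ U) =
          (QuotientGroup.mk g : G ⧸ U) ^ 1 from (pow_one _).symm]
        rw [pow_eq_pow_mod (r * q) (pow_orderOf_eq_one (QuotientGroup.mk g : G ⧸ U))]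
        rw [mul_comm r q, hr]
  obtain ⟨h, _, hh⟩ := hgT
  exact ⟨h, hh⟩

end Topo

section Main

variable {G : Type u} [Group G] [TopologicalSpace G] [IsTopologicalGroup G]
  [CompactSpace G] [T2Space G] [TotallyDisconnectedSpace G] {p : ℕ}

lemma index_p_pow (hp : p.Prime)
    (hpro : ∀ N : Subgroup G, N.Normal → IsOpen (N : Set G) → ∃ n : ℕ, N.index = p ^ n)
    (N : Subgroup G) (hN : N.Normal) (hidx : N.index ≠ 0) :
    ∃ k : ℕ, N.index = p ^ k := by
  haveI := hN
  haveI hfin : Finite (G ⧸ N) :=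
    Nat.finite_of_card_ne_zero (by rwa [← Subgroup.index_eq_card])
  have hall : ∀ q : ℕ, q.Prime → q ∣ N.index → q = p := by
    intro q hq hdvd
    by_contra hne
    haveI := Fact.mk hq
    obtain ⟨y, hy⟩ := exists_prime_orderOf_dvd_card' (G := G ⧸ N) q
      (by rwa [← Subgroup.index_eq_card])
    have hsurj : Function.Surjective (fun x : G ⧸ N => x ^ q) := by
      intro x
      obtain ⟨z, rfl⟩ := QuotientGroup.mk_surjective x
      obtain ⟨w, hw⟩ := exists_pow_eq hp hpro hq hne z
      exact ⟨QuotientGroup.mk w, by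
        show (QuotientGroup.mk w : G ⧸ N) ^ q = QuotientGroup.mk z
        rw [← QuotientGroup.mk_pow, hw]⟩
    have hinj := Finite.injective_iff_surjective.mpr hsurj
    have h1 : y = 1 := hinj (by
      show y ^ q = 1 ^ q
      rw [one_pow, ← hy, pow_orderOf_eq_one])
    rw [h1, orderOf_one] at hy
    exact hq.one_lt.ne' hy.symm
  exact ⟨_, Nat.eq_prime_pow_of_unique_prime_dvd hidx (fun {q} hq hdvd => hall q hq hdvd)⟩

end Main

/-! ### Continuity of pinProd -/

lemma pinProd_continuous {H : Type u} [Group H] [TopologicalSpace H] [IsTopologicalGroup H] :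
    ∀ {d : ℕ} (a : Fin d → H), Continuous (fun g : Fin d → H => pinProd a g)
  | 0, _ => continuous_const
  | d + 1, a => by
    show Continuous (fun g : Fin (d + 1) → H => ⁅a 0, g 0⁆ * pinProd (Fin.tail a) (Fin.tail g))
    have h1 : Continuous (fun g : Fin (d + 1) → H => ⁅a 0, g 0⁆) := by
      simp only [commutatorElement_def]
      exact ((continuous_const.mul (continuous_apply 0)).mul continuous_const).mul
        (continuous_apply 0).inv
    have h2 : Continuous (fun g : Fin (d + 1) → H => Fin.tail g) :=
      continuous_pi (fun i => continuous_apply i.succ)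
    exact h1.mul ((pinProd_continuous (Fin.tail a)).comp h2)

lemma mul_pow_mem_commutator_aux {Q : Type u} [Group Q] (g h : Q) (m : ℕ) :
    ((g * h) ^ m)⁻¹ * (g ^ m * h ^ m) ∈ commutator Q := by
  rw [← QuotientGroup.eq_one_iff]
  have hc : Commute (QuotientGroup.mk g : Q ⧸ commutator Q) (QuotientGroup.mk h) := by
    refine commutatorElement_eq_one_iff_commute.mp ?_
    rw [show ⁅(QuotientGroup.mk g : Q ⧸ commutator Q), QuotientGroup.mk h⁆ =
      QuotientGroup.mk ⁅g, h⁆ from (map_commutatorElement (QuotientGroup.mk' _) g h).symm,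
      QuotientGroup.eq_one_iff, commutator_def]
    exact Subgroup.commutator_mem_commutator (Subgroup.mem_top _) (Subgroup.mem_top _)
  simp only [QuotientGroup.mk_mul, QuotientGroup.mk_inv, QuotientGroup.mk_pow]
  rw [hc.mul_pow]
  exact inv_mul_cancel _

section Main2

variable {G : Type u} [Group G] [TopologicalSpace G] [IsTopologicalGroup G]
  [CompactSpace G] [T2Space G] [TotallyDisconnectedSpace G] {p : ℕ}

lemma closure_commutator_rep (hp : p.Prime)
    (hpro : ∀ N : Subgroup G, N.Normal → IsOpen (N : Set G) → ∃ n : ℕ, N.index = p ^ n)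
    {d : ℕ} {a : Fin d → G}
    (hdense : Dense ((Subgroup.closure (Set.range a) : Subgroup G) : Set G)) :
    ∀ x ∈ (commutator G).topologicalClosure, ∃ gs : Fin d → G, x = pinProd a gs := by
  intro x hx
  have hTc : IsClosed (Set.range fun gs : Fin d → G => pinProd a gs) :=
    (isCompact_range (pinProd_continuous a)).isClosed
  have hxT : x ∈ Set.range (fun gs : Fin d → G => pinProd a gs) := by
    apply mem_closed_of_approx hTc
    intro U hUn hUo
    obtain ⟨nU, hU⟩ := hpro U hUn hUo
    haveI := hUn
    haveI : Finite (G ⧸ U) := Subgroup.quotient_finite_of_isOpen U hUo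
    haveI := Fact.mk hp
    have hpg : IsPGroup p (G ⧸ U) := fun y =>
      ⟨nU, by rw [← hU, Subgroup.index_eq_card]; exact pow_card_eq_one'⟩
    obtain ⟨nn, hnn⟩ := Subgroup.nilpotent_iff_lowerCentralSeries.mp hpg.isNilpotent
    have hbot : (⊤ : Subgroup (G ⧸ U)).lowerCentralSeries (nn + 1) = ⊥ :=
      le_bot_iff.mp (hnn ▸ Subgroup.lowerCentralSeries_antitone ⊤ (Nat.le_succ nn))
    set π := QuotientGroup.mk' U with hπdef
    have hgen : Subgroup.closure (Set.range (π ∘ a)) = ⊤ := by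
      rw [eq_top_iff]
      rintro y -
      obtain ⟨z, rfl⟩ := QuotientGroup.mk'_surjective U y
      have hopen : IsOpen ((z⁻¹ * ·) ⁻¹' (U : Set G)) :=
        hUo.preimage (continuous_const.mul continuous_id)
      obtain ⟨w, hwD, hwU⟩ := hdense.exists_mem_open hopen ⟨z, by simpa using U.one_mem⟩
      have heq : (QuotientGroup.mk z : G ⧸ U) = QuotientGroup.mk w :=
        QuotientGroup.eq.mpr hwU
      rw [QuotientGroup.mk'_apply, heq]
      have h1 : (QuotientGroup.mk w : G ⧸ U) ∈
          Subgroup.map π (Subgroup.closure (Set.range a)) := ⟨w, hwD, rfl⟩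
      rw [MonoidHom.map_closure, ← Set.range_comp] at h1
      exact h1
    have hx' : x ∈ closure ((commutator G : Subgroup G) : Set G) := by
      rw [← Subgroup.topologicalClosure_coe]; exact hx
    obtain ⟨c, hcO, hcC⟩ := mem_closure_iff.mp hx' ((x⁻¹ * ·) ⁻¹' (U : Set G))
      (hUo.preimage (continuous_const.mul continuous_id)) (by simpa using U.one_mem)
    have hxc : (QuotientGroup.mk x : G ⧸ U) = QuotientGroup.mk c :=
      QuotientGroup.eq.mpr hcO
    have hcomm : (QuotientGroup.mk x : G ⧸ U) ∈ commutator (G ⧸ U) := by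
      rw [hxc]
      have h1 : (QuotientGroup.mk c : G ⧸ U) ∈ Subgroup.map π (commutator G) := ⟨c, hcC, rfl⟩
      rwa [commutator_def, Subgroup.map_commutator, Subgroup.map_top_of_surjective _
        (QuotientGroup.mk'_surjective U), ← commutator_def] at h1
    obtain ⟨gq, hgq⟩ := nilpotent_rep nn (G ⧸ U) hbot (π ∘ a) hgen _ hcomm
    choose gl hgl using fun i => QuotientGroup.mk'_surjective U (gq i)
    refine ⟨pinProd a gl, ⟨gl, rfl⟩, ?_⟩
    refine QuotientGroup.eq.mp ?_
    show (QuotientGroup.mk x : G ⧸ U) = QuotientGroup.mk (pinProd a gl)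
    have h2 : (QuotientGroup.mk (pinProd a gl) : G ⧸ U) = π (pinProd a gl) := rfl
    rw [h2, pinProd_map π a gl, show π ∘ gl = gq from funext hgl, ← hgq]
  obtain ⟨gs, hgs⟩ := hxT
  exact ⟨gs, hgs.symm⟩

lemma exists_open_frattini (hp : p.Prime)
    (hpro : ∀ N : Subgroup G, N.Normal → IsOpen (N : Set G) → ∃ n : ℕ, N.index = p ^ n)
    {d : ℕ} {a : Fin d → G}
    (hdense : Dense ((Subgroup.closure (Set.range a) : Subgroup G) : Set G)) :
    ∃ S : Subgroup G, S.Normal ∧ IsOpen (S : Set G) ∧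
      ∀ s ∈ S, ∃ g k : G, k ∈ commutator G ∧ s = g ^ p * k := by
  classical
  set K := (commutator G).topologicalClosure with hKdef
  haveI hKn : K.Normal := Subgroup.is_normal_topologicalClosure (commutator G)
  have hKcomm : ∀ k ∈ K, k ∈ commutator G := by
    intro k hk
    obtain ⟨gs, rfl⟩ := closure_commutator_rep hp hpro hdense k hk
    exact pinProd_mem_commutator a gs
  have hmulmem : ∀ x : G, (∃ g k : G, k ∈ K ∧ x = g ^ p * k) → ∀ y : G,
      (∃ g k : G, k ∈ K ∧ y = g ^ p * k) → ∃ g k : G, k ∈ K ∧ x * y = g ^ p * k := by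
    rintro x ⟨g, k, hk, rfl⟩ y ⟨h, l, hl, rfl⟩
    refine ⟨g * h, (((g * h) ^ p)⁻¹ * (g ^ p * h ^ p)) * ((h ^ p)⁻¹ * k * h ^ p) * l,
      ?_, ?_⟩
    · refine K.mul_mem (K.mul_mem ?_ ?_) hl
      · exact Subgroup.le_topologicalClosure _ (mul_pow_mem_commutator_aux g h p)
      · have h2 := hKn.conj_mem k hk (h ^ p)⁻¹
        simpa using h2
    · group
  let S : Subgroup G :=
    { carrier := {x | ∃ g k : G, k ∈ K ∧ x = g ^ p * k}
      one_mem' := ⟨1, 1, K.one_mem, by simp⟩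
      mul_mem' := fun hx hy => hmulmem _ hx _ hy
      inv_mem' := by
        rintro x ⟨g, k, hk, rfl⟩
        refine ⟨g⁻¹, g ^ p * k⁻¹ * (g ^ p)⁻¹, ?_, ?_⟩
        · have h2 := hKn.conj_mem k⁻¹ (K.inv_mem hk) (g ^ p)
          simpa using h2
        · rw [inv_pow]; group }
  have hSmem : ∀ x : G, x ∈ S ↔ ∃ g k : G, k ∈ K ∧ x = g ^ p * k := fun x => Iff.rfl
  have hSnormal : S.Normal := by
    constructor
    rintro x ⟨g, k, hk, rfl⟩ y
    refine ⟨y * g * y⁻¹, y * k * y⁻¹, hKn.conj_mem k hk y, ?_⟩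
    rw [conj_pow]; group
  have hKcl : IsClosed (K : Set G) := Subgroup.isClosed_topologicalClosure _
  haveI : CompactSpace K := isCompact_iff_compactSpace.mp hKcl.isCompact
  have hSeq : (S : Set G) = Set.range (fun zk : G × K => zk.1 ^ p * (zk.2 : G)) := by
    ext x
    constructor
    · rintro ⟨g, k, hk, rfl⟩; exact ⟨(g, ⟨k, hk⟩), rfl⟩
    · rintro ⟨⟨g, k⟩, rfl⟩; exact ⟨g, (k : G), k.2, rfl⟩
  have hScl : IsClosed (S : Set G) := by
    rw [hSeq]
    refine (isCompact_range ?_).isClosed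
    exact ((continuous_pow p).comp continuous_fst).mul
      (continuous_subtype_val.comp continuous_snd)
  have hpowS : ∀ g : G, g ^ p ∈ S := fun g => ⟨g, 1, K.one_mem, by rw [mul_one]⟩
  have hcommS : ∀ c ∈ commutator G, c ∈ S :=
    fun c hc => ⟨1, c, Subgroup.le_topologicalClosure _ hc, by rw [one_pow, one_mul]⟩
  haveI := hSnormal
  have hexp : ∀ y : G ⧸ S, y ^ p = 1 := by
    intro y; obtain ⟨z, rfl⟩ := QuotientGroup.mk_surjective y
    rw [← QuotientGroup.mk_pow, QuotientGroup.eq_one_iff]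
    exact hpowS z
  have hcomm : ∀ u v : G ⧸ S, Commute u v := by
    intro u v
    obtain ⟨z, rfl⟩ := QuotientGroup.mk_surjective u
    obtain ⟨w, rfl⟩ := QuotientGroup.mk_surjective v
    refine commutatorElement_eq_one_iff_commute.mp ?_
    rw [show ⁅(QuotientGroup.mk z : G ⧸ S), QuotientGroup.mk w⁆ =
      QuotientGroup.mk ⁅z, w⁆ from (map_commutatorElement (QuotientGroup.mk' S) z w).symm,
      QuotientGroup.eq_one_iff]
    refine hcommS _ ?_
    rw [commutator_def]
    exact Subgroup.commutator_mem_commutator (Subgroup.mem_top _) (Subgroup.mem_top _)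
  haveI : NeZero p := ⟨hp.ne_zero⟩
  haveI : Fact (1 < p) := ⟨hp.one_lt⟩
  set b : Fin d → G ⧸ S := fun i => QuotientGroup.mk (a i) with hbdef
  set img : (Fin d → ZMod p) → G ⧸ S :=
    fun f => (List.ofFn fun i => b i ^ (f i).val).prod with himgdef
  have hlist : ∀ (n : ℕ) (x y : Fin n → G ⧸ S),
      (List.ofFn fun i => x i * y i).prod = (List.ofFn x).prod * (List.ofFn y).prod := by
    intro n
    induction n with
    | zero => intro x y; simp
    | succ n ih =>
      intro x y
      rw [List.ofFn_succ, List.ofFn_succ, List.ofFn_succ, List.prod_cons, List.prod_cons,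
        List.prod_cons]
      rw [show (fun i : Fin n => x i.succ * y i.succ) =
        (fun i : Fin n => (fun j => x (Fin.succ j)) i * (fun j => y (Fin.succ j)) i) from rfl,
        ih]
      exact (hcomm _ _).mul_mul_mul_comm _ _
  have himg_mul : ∀ f g : Fin d → ZMod p, img (f + g) = img f * img g := by
    intro f g
    rw [himgdef]
    show (List.ofFn fun i => b i ^ ((f + g) i).val).prod = _
    rw [show (fun i => b i ^ ((f + g) i).val) =
      (fun i => (b i ^ (f i).val) * (b i ^ (g i).val)) from funext fun i => by
        rw [Pi.add_apply, ZMod.val_add, ← pow_eq_pow_mod _ (hexp (b i)), pow_add], hlist]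
  have haux : ∀ (n : ℕ) (x : Fin n → G ⧸ S) (i : Fin n), (∀ j, j ≠ i → x j = 1) →
      (List.ofFn x).prod = x i := by
    intro n
    induction n with
    | zero => exact fun x i _ => i.elim0
    | succ n ih =>
      intro x i hx
      rw [List.ofFn_succ, List.prod_cons]
      by_cases h0 : i = 0
      · subst h0
        have hone : ∀ y ∈ List.ofFn (fun j : Fin n => x j.succ), y = 1 := by
          intro y hy
          obtain ⟨j, rfl⟩ := List.mem_ofFn.mp hy
          exact hx j.succ (Fin.succ_ne_zero j)
        rw [List.prod_eq_one hone, mul_one]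
      · rw [hx 0 (fun h => h0 h.symm), one_mul]
        have h2 := ih (fun j => x j.succ) (i.pred h0) (fun j hj => hx j.succ (by
          intro h; exact hj (Fin.succ_inj.mp (h.trans (Fin.succ_pred i h0).symm))))
        rw [h2]
        show x (i.pred h0).succ = x i
        rw [Fin.succ_pred]
  let Sr : Subgroup (G ⧸ S) :=
    { carrier := Set.range img
      one_mem' := by
        refine ⟨0, ?_⟩
        show (List.ofFn fun i => b i ^ ((0 : Fin d → ZMod p) i).val).prod = 1
        refine List.prod_eq_one ?_
        intro y hy
        obtain ⟨j, rfl⟩ := List.mem_ofFn.mp hy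
        show b j ^ (0 : ZMod p).val = 1
        rw [ZMod.val_zero, pow_zero]
      mul_mem' := by
        rintro x y ⟨f, rfl⟩ ⟨g, rfl⟩
        exact ⟨f + g, himg_mul f g⟩
      inv_mem' := by
        rintro x ⟨f, rfl⟩
        have h0 : img f * img (-f) = 1 := by
          rw [← himg_mul, add_neg_cancel]
          show (List.ofFn fun i => b i ^ ((0 : Fin d → ZMod p) i).val).prod = 1
          refine List.prod_eq_one ?_
          intro y hy
          obtain ⟨j, rfl⟩ := List.mem_ofFn.mp hy
          show b j ^ (0 : ZMod p).val = 1
          rw [ZMod.val_zero, pow_zero]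
        exact ⟨-f, (inv_eq_of_mul_eq_one_right h0).symm⟩ }
  have hSrfin : Finite Sr := Set.Finite.to_subtype (Set.finite_range img)
  have hbSr : ∀ i, b i ∈ Sr := by
    intro i
    refine ⟨Function.update (fun _ => 0) i 1, ?_⟩
    show (List.ofFn fun j => b j ^ ((Function.update (fun _ => 0) i 1 : Fin d → ZMod p) j).val).prod
      = b i
    rw [haux d _ i (fun j hj => by
      rw [Function.update_of_ne hj, ZMod.val_zero, pow_zero])]
    rw [Function.update_self, ZMod.val_one, pow_one]
  have hallSr : ∀ y : G ⧸ S, y ∈ Sr := by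
    have hfib : ∀ c : G ⧸ S, IsClosed ((QuotientGroup.mk : G → G ⧸ S) ⁻¹' {c}) := by
      intro c
      obtain ⟨w, rfl⟩ := QuotientGroup.mk_surjective c
      have heq : ((QuotientGroup.mk : G → G ⧸ S) ⁻¹' {QuotientGroup.mk w})
          = (fun z => w⁻¹ * z) ⁻¹' (S : Set G) := by
        ext z
        simp only [Set.mem_preimage, Set.mem_singleton_iff, SetLike.mem_coe]
        exact ⟨fun h => QuotientGroup.eq.mp h.symm, fun h => (QuotientGroup.eq.mpr h).symm⟩
      rw [heq]
      exact hScl.preimage (continuous_const.mul continuous_id)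
    have hUcl : IsClosed (⋃ c : Sr, ((QuotientGroup.mk : G → G ⧸ S) ⁻¹' {(c : G ⧸ S)})) :=
      isClosed_iUnion_of_finite (fun c => hfib _)
    have hsub : ((Subgroup.closure (Set.range a) : Subgroup G) : Set G) ⊆
        ⋃ c : Sr, ((QuotientGroup.mk : G → G ⧸ S) ⁻¹' {(c : G ⧸ S)}) := by
      intro w hw
      have hwSr : (QuotientGroup.mk w : G ⧸ S) ∈ Sr := by
        have h1 : (QuotientGroup.mk w : G ⧸ S) ∈
            Subgroup.map (QuotientGroup.mk' S) (Subgroup.closure (Set.range a)) :=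
          ⟨w, hw, rfl⟩
        rw [MonoidHom.map_closure, ← Set.range_comp] at h1
        have hle : Subgroup.closure (Set.range ((QuotientGroup.mk' S) ∘ a)) ≤ Sr :=
          (Subgroup.closure_le _).mpr (by rintro _ ⟨i, rfl⟩; exact hbSr i)
        exact hle h1
      exact Set.mem_iUnion.mpr ⟨⟨_, hwSr⟩, rfl⟩
    have huniv : (⋃ c : Sr, ((QuotientGroup.mk : G → G ⧸ S) ⁻¹' {(c : G ⧸ S)}))
        = Set.univ := by
      apply Set.eq_univ_of_univ_subset
      calc (Set.univ : Set G)
          = closure ((Subgroup.closure (Set.range a) : Subgroup G) : Set G) :=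
            hdense.closure_eq.symm
        _ ⊆ closure (⋃ c : Sr, ((QuotientGroup.mk : G → G ⧸ S) ⁻¹' {(c : G ⧸ S)})) :=
            closure_mono hsub
        _ = _ := hUcl.closure_eq
    intro y
    obtain ⟨z, rfl⟩ := QuotientGroup.mk_surjective y
    have hz : z ∈ ⋃ c : Sr, ((QuotientGroup.mk : G → G ⧸ S) ⁻¹' {(c : G ⧸ S)}) :=
      huniv ▸ Set.mem_univ z
    obtain ⟨c, hc⟩ := Set.mem_iUnion.mp hz
    rw [Set.mem_preimage, Set.mem_singleton_iff] at hc
    rw [hc]; exact c.2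
  haveI hQfin : Finite (G ⧸ S) :=
    Finite.of_injective (fun y : G ⧸ S => (⟨y, hallSr y⟩ : Sr))
      (fun y z h => by simpa using congrArg Subtype.val h)
  haveI : S.FiniteIndex := Subgroup.finiteIndex_of_finite_quotient (H := S)
  have hSopen : IsOpen (S : Set G) := Subgroup.isOpen_of_isClosed_of_finiteIndex S hScl
  refine ⟨S, hSnormal, hSopen, fun s hs => ?_⟩
  obtain ⟨g, k, hk, rfl⟩ := hs
  exact ⟨g, k, hKcomm k hk, rfl⟩

end Main2

/-! ### Helpers for the recursion -/

lemma finite_set_param {α : Type u} {s : Set α} (hs : s.Finite) :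
    ∃ (d : ℕ) (a : Fin d → α), Set.range a = s := by
  haveI := hs.fintype
  refine ⟨hs.toFinset.card, fun i => (hs.toFinset.equivFin.symm i : α), ?_⟩
  ext x
  constructor
  · rintro ⟨i, rfl⟩
    exact hs.mem_toFinset.mp (hs.toFinset.equivFin.symm i).2
  · intro hx
    exact ⟨hs.toFinset.equivFin ⟨x, hs.mem_toFinset.mpr hx⟩,
      congrArg Subtype.val (Equiv.symm_apply_apply _ _)⟩

lemma mk_commutator_mem {Q : Type u} [Group Q] (N' : Subgroup Q) [N'.Normal] {c : Q}
    (hc : c ∈ commutator Q) :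
    (QuotientGroup.mk c : Q ⧸ N') ∈ commutator (Q ⧸ N') := by
  have h1 : (QuotientGroup.mk c : Q ⧸ N') ∈
      Subgroup.map (QuotientGroup.mk' N') (commutator Q) := ⟨c, hc, rfl⟩
  rwa [commutator_def, Subgroup.map_commutator, Subgroup.map_top_of_surjective _
    (QuotientGroup.mk'_surjective N'), ← commutator_def] at h1

/-! ### The recursion -/

theorem serre_aux (p : ℕ) (hp : p.Prime) :
    ∀ n : ℕ, n ≠ 0 →
    ∀ (G : Type u) [Group G] [TopologicalSpace G] [IsTopologicalGroup G]
      [CompactSpace G] [T2Space G] [TotallyDisconnectedSpace G],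
      (∀ N : Subgroup G, N.Normal → IsOpen (N : Set G) → ∃ k : ℕ, N.index = p ^ k) →
      (∃ s : Set G, s.Finite ∧ Dense ((Subgroup.closure s : Subgroup G) : Set G)) →
      ∀ N : Subgroup G, N.Normal → N.index = n → IsOpen (N : Set G) := by
  intro n
  induction n using Nat.strong_induction_on with
  | _ n ih =>
  intro hn G _ _ _ _ _ _ hpro hfg N hN hidx
  haveI := hN
  obtain ⟨s, hsfin, hsdense⟩ := hfg
  obtain ⟨d, a, ha⟩ := finite_set_param hsfin
  rw [← ha] at hsdense
  by_cases h1 : n = 1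
  · have hNt : N = ⊤ := Subgroup.index_eq_one.mp (hidx.trans h1)
    rw [hNt, Subgroup.coe_top]
    exact isOpen_univ
  obtain ⟨S, hSn, hSo, hSprop⟩ := exists_open_frattini hp hpro hsdense
  haveI := hSn
  set M := N ⊔ S with hM
  have hMo : IsOpen (M : Set G) := Subgroup.isOpen_mono le_sup_right hSo
  by_cases hMtop : M = ⊤
  · -- In this case N = ⊤, contradicting n ≠ 1.
    exfalso
    haveI hNfin : Finite (G ⧸ N) := Nat.finite_of_card_ne_zero
      (by rw [← Subgroup.index_eq_card, hidx]; exact hn)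
    obtain ⟨k, hk⟩ := index_p_pow hp hpro N hN (by rw [hidx]; exact hn)
    have hqall : ∀ y : G ⧸ N, ∃ z : G ⧸ N, y * (z ^ p)⁻¹ ∈ commutator (G ⧸ N) := by
      intro y
      obtain ⟨x, rfl⟩ := QuotientGroup.mk_surjective y
      have hxM : x ∈ ((N ⊔ S : Subgroup G) : Set G) := by
        rw [← hM, hMtop]; exact Subgroup.mem_top x
      rw [Subgroup.mul_normal] at hxM
      obtain ⟨n₀, hn₀, s₀, hs₀, rfl⟩ := hxM
      obtain ⟨g, c, hc, hgc⟩ := hSprop s₀ hs₀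
      refine ⟨QuotientGroup.mk g, ?_⟩
      have h2 : (QuotientGroup.mk (n₀ * s₀) : G ⧸ N) = QuotientGroup.mk (g ^ p * c) := by
        rw [QuotientGroup.mk_mul, (QuotientGroup.eq_one_iff n₀).mpr hn₀, one_mul, hgc]
      rw [h2, QuotientGroup.mk_mul, QuotientGroup.mk_pow]
      have h3 := (Subgroup.commutator_normal (⊤ : Subgroup (G ⧸ N)) ⊤).conj_mem _
        (mk_commutator_mem N hc) ((QuotientGroup.mk g : G ⧸ N) ^ p)
      rw [← commutator_def] at h3
      simpa [mul_assoc] using h3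
    haveI : Finite ((G ⧸ N) ⧸ commutator (G ⧸ N)) := Quotient.finite _
    have hampow : ∀ y : (G ⧸ N) ⧸ commutator (G ⧸ N),
        ∃ z : (G ⧸ N) ⧸ commutator (G ⧸ N), z ^ p = y := by
      intro y
      obtain ⟨u, rfl⟩ := QuotientGroup.mk_surjective y
      obtain ⟨z, hz⟩ := hqall u
      refine ⟨QuotientGroup.mk z, ?_⟩
      rw [← QuotientGroup.mk_pow]
      refine QuotientGroup.eq.mpr ?_
      have h3 := (Subgroup.commutator_normal (⊤ : Subgroup (G ⧸ N)) ⊤).conj_mem _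
        (by rw [← commutator_def]; exact hz) (z ^ p)⁻¹
      rw [← commutator_def] at h3
      simpa [mul_assoc] using h3
    have hAbcard : Nat.card ((G ⧸ N) ⧸ commutator (G ⧸ N)) ∣ p ^ k := by
      calc Nat.card ((G ⧸ N) ⧸ commutator (G ⧸ N)) ∣ Nat.card (G ⧸ N) :=
            Subgroup.card_quotient_dvd_card _
        _ = p ^ k := by rw [← Subgroup.index_eq_card, hidx, ← hk, hidx]
    obtain ⟨e, _, he⟩ := (Nat.dvd_prime_pow hp).mp hAbcard
    have hiter : ∀ (m : ℕ) (y : (G ⧸ N) ⧸ commutator (G ⧸ N)),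
        ∃ z, z ^ (p ^ m) = y := by
      intro m
      induction m with
      | zero => exact fun y => ⟨y, by rw [pow_zero, pow_one]⟩
      | succ m ihm =>
        intro y
        obtain ⟨z, hz⟩ := ihm y
        obtain ⟨w, hw⟩ := hampow z
        exact ⟨w, by rw [pow_succ, mul_comm (p ^ m) p, pow_mul, hw, hz]⟩
    have hall1 : ∀ y : (G ⧸ N) ⧸ commutator (G ⧸ N), y = 1 := by
      intro y
      obtain ⟨z, hz⟩ := hiter e y
      rw [← hz, ← he, pow_card_eq_one']
    have hcommtop : commutator (G ⧸ N) = ⊤ := by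
      rw [eq_top_iff]
      rintro q -
      exact (QuotientGroup.eq_one_iff q).mp (hall1 _)
    haveI := Fact.mk hp
    have hpgQ : IsPGroup p (G ⧸ N) := fun y =>
      ⟨k, by rw [← hk, Subgroup.index_eq_card]; exact pow_card_eq_one'⟩
    obtain ⟨m, hm⟩ := Subgroup.nilpotent_iff_lowerCentralSeries.mp hpgQ.isNilpotent
    have hlcs : ∀ j, (⊤ : Subgroup (G ⧸ N)).lowerCentralSeries j = ⊤ := by
      intro j
      induction j with
      | zero => exact Subgroup.lowerCentralSeries_zero _
      | succ j ihj =>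
        show ⁅(⊤ : Subgroup (G ⧸ N)).lowerCentralSeries j, ⊤⁆ = ⊤
        rw [ihj, ← commutator_def, hcommtop]
    have hbot : (⊤ : Subgroup (G ⧸ N)) = ⊥ := by rw [← hlcs m, hm]
    have hNtop : N = ⊤ := by
      rw [eq_top_iff]
      rintro x -
      rw [← QuotientGroup.eq_one_iff]
      exact Subgroup.mem_bot.mp (hbot ▸ Subgroup.mem_top (QuotientGroup.mk x))
    rw [hNtop, Subgroup.index_top] at hidx
    exact h1 hidx.symm
  · -- Recurse inside the open subgroup M.
    haveI hMfin : Finite (G ⧸ M) := Subgroup.quotient_finite_of_isOpen M hMo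
    have hMidx0 : M.index ≠ 0 := Subgroup.index_ne_zero_of_finite
    have hMidx1 : M.index ≠ 1 := fun h => hMtop (Subgroup.index_eq_one.mp h)
    have hNM : N ≤ M := le_sup_left
    have hrel : N.relIndex M * M.index = n := by rw [Subgroup.relIndex_mul_index hNM, hidx]
    have hrel0 : N.relIndex M ≠ 0 := fun h => hn (by rw [← hrel, h, zero_mul])
    have hlt : N.relIndex M < n := by
      have h2 : 2 ≤ M.index := by omega
      have h3 : N.relIndex M * 2 ≤ N.relIndex M * M.index := Nat.mul_le_mul_left _ h2
      have h4 := Nat.pos_of_ne_zero hrel0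
      omega
    have hMcl : IsClosed (M : Set G) := Subgroup.isClosed_of_isOpen M hMo
    haveI : CompactSpace M := isCompact_iff_compactSpace.mp hMcl.isCompact
    have hproM : ∀ V : Subgroup M, V.Normal → IsOpen (V : Set M) →
        ∃ kk : ℕ, V.index = p ^ kk := by
      intro V hV hVo
      set V' := V.map M.subtype with hV'def
      have hV'o : IsOpen (V' : Set G) := by
        have h5 := hMo.isOpenEmbedding_subtypeVal.isOpenMap _ hVo
        have h6 : (V' : Set G) = Subtype.val '' (V : Set M) := by
          rw [hV'def, Subgroup.coe_map, Subgroup.coe_subtype]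
        rw [h6]; exact h5
      haveI : Finite (G ⧸ V') := Subgroup.quotient_finite_of_isOpen V' hV'o
      haveI : V'.FiniteIndex := Subgroup.finiteIndex_of_finite_quotient (H := V')
      have hWcl : IsClosed (V'.normalCore : Set G) :=
        Subgroup.normalCore_isClosed V' (Subgroup.isClosed_of_isOpen V' hV'o)
      have hWo : IsOpen (V'.normalCore : Set G) :=
        Subgroup.isOpen_of_isClosed_of_finiteIndex _ hWcl
      obtain ⟨kk, hkk⟩ := hpro V'.normalCore inferInstance hWo
      have hVidx : V.index = V'.relIndex M := by
        have h7 : V'.subgroupOf M = V :=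
          Subgroup.comap_map_eq_self_of_injective M.subtype_injective V
        rw [Subgroup.relIndex, h7]
      have hdvd : V.index ∣ p ^ kk := by
        rw [hVidx, ← hkk]
        have hWV : V'.normalCore ≤ V' := Subgroup.normalCore_le V'
        have hV'M : V' ≤ M := by rw [hV'def]; exact Subgroup.map_subtype_le V
        calc V'.relIndex M ∣ V'.normalCore.relIndex M :=
              Subgroup.relIndex_dvd_of_le_left M hWV
          _ ∣ V'.normalCore.index := by
              rw [← Subgroup.relIndex_mul_index (hWV.trans hV'M)]
              exact dvd_mul_right _ _
      obtain ⟨kk', _, hkk'⟩ := (Nat.dvd_prime_pow hp).mp hdvd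
      exact ⟨kk', hkk'⟩
    have hfgM : ∃ t : Set M, t.Finite ∧ Dense ((Subgroup.closure t : Subgroup M) : Set M) := by
      set D := Subgroup.closure (Set.range a) with hDdef
      haveI : Group.FG D :=
        (Group.fg_iff_subgroup_fg D).mpr ((Subgroup.fg_iff D).mpr
          ⟨Set.range a, rfl, Set.finite_range a⟩)
      haveI : M.FiniteIndex := Subgroup.finiteIndex_of_finite_quotient (H := M)
      haveI : (M.subgroupOf D).FiniteIndex := Subgroup.instFiniteIndex_subgroupOf M D
      haveI hfgMD : Group.FG (M.subgroupOf D) := Subgroup.fg_of_index_ne_zero _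
      obtain ⟨T, hTtop, hTfin⟩ := Group.fg_iff.mp hfgMD
      let ι : (M.subgroupOf D) →* M :=
        { toFun := fun x => ⟨(x : D), Subgroup.mem_subgroupOf.mp x.2⟩
          map_one' := rfl
          map_mul' := fun x y => rfl }
      refine ⟨ι '' T, hTfin.image ι, ?_⟩
      have hcl : Subgroup.closure (ι '' T) = Subgroup.map ι ⊤ := by
        rw [← hTtop, MonoidHom.map_closure]
      rw [hcl]
      have hset : {m : M | (m : G) ∈ D} ⊆ ((Subgroup.map ι ⊤ : Subgroup M) : Set M) := by
        rintro m hm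
        exact ⟨⟨⟨(m : G), hm⟩, Subgroup.mem_subgroupOf.mpr m.2⟩, Subgroup.mem_top _, rfl⟩
      refine Dense.mono hset ?_
      rw [dense_iff_inter_open]
      rintro O hO hOne
      obtain ⟨O', hO', hO'eq⟩ := isOpen_induced_iff.mp hO
      obtain ⟨⟨m, hmM⟩, hmO⟩ := hOne
      have hmO' : m ∈ O' := by rw [← hO'eq] at hmO; exact hmO
      have hO2 : IsOpen (O' ∩ (M : Set G)) := hO'.inter hMo
      obtain ⟨w, hwD, hwO⟩ := hsdense.exists_mem_open hO2 ⟨m, hmO', hmM⟩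
      exact ⟨⟨w, hwO.2⟩, by rw [← hO'eq]; exact hwO.1, hwD⟩
    have hNM' : (N.subgroupOf M).Normal := hN.subgroupOf M
    have hNopen' := ih (N.relIndex M) hlt hrel0 M hproM hfgM (N.subgroupOf M) hNM' rfl
    have himg : (Subtype.val '' ((N.subgroupOf M : Subgroup M) : Set M)) = (N : Set G) := by
      ext x
      constructor
      · rintro ⟨⟨y, hyM⟩, hy, rfl⟩
        exact Subgroup.mem_subgroupOf.mp hy
      · intro hx
        exact ⟨⟨x, hNM hx⟩, Subgroup.mem_subgroupOf.mpr hx, rfl⟩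
    rw [← himg]
    exact hMo.isOpenEmbedding_subtypeVal.isOpenMap _ hNopen'

end SerrePf

/-- Serre's theorem: in a topologically finitely generated pro-p group, every
finite index subgroup is open. -/
theorem serre_finiteIndex_isOpen
    (p : ℕ) (hp : p.Prime)
    (G : Type*) [Group G] [TopologicalSpace G] [IsTopologicalGroup G]
    [CompactSpace G] [T2Space G] [TotallyDisconnectedSpace G]
    (hpro : ∀ N : Subgroup G, N.Normal → IsOpen (N : Set G) → ∃ n : ℕ, N.index = p ^ n)
    (hfg : ∃ T : Finset G, (Subgroup.closure (T : Set G)).topologicalClosure = ⊤)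
    (H : Subgroup G) (hH : H.index ≠ 0) :
    IsOpen (H : Set G) := by
  obtain ⟨T, hT⟩ := hfg
  have hdense : Dense ((Subgroup.closure (T : Set G) : Subgroup G) : Set G) := by
    rw [dense_iff_closure_eq, ← Subgroup.topologicalClosure_coe, hT, Subgroup.coe_top]
  haveI : H.FiniteIndex := ⟨hH⟩
  haveI : H.normalCore.FiniteIndex := Subgroup.finiteIndex_normalCore H
  have hNo : IsOpen ((H.normalCore : Subgroup G) : Set G) :=
    SerrePf.serre_aux p hp H.normalCore.index Subgroup.FiniteIndex.index_ne_zero G hpro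
      ⟨(T : Set G), T.finite_toSet, hdense⟩ H.normalCore (Subgroup.normalCore_normal H) rfl
  exact Subgroup.isOpen_mono H.normalCore_le hNo
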